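/- Let M be a nonzero right ideal of the Weyl algebra A contained in ℂ(x)[y] whose intersection with ℂ[x] is nonzero, such that the leading coefficients (in y) of all elements of M lie in ℂ[x] and M contains an element with constant nonzero leading coefficient. If M' is another such fractional ideal and M' = qM for some q in the quotient field Q of A, then q is a nonzero constant and M' = M. -/

import Mathlib

noncomputable section

namespace NFIU

open Polynomial

variable {Q : Type} [DivisionRing Q] [Algebra ℂ Q]

abbrev RF (X : Q) : Set Q :=
  {q : Q | ∃ p r : Polynomial ℂ, r ≠ 0 ∧ q = aeval X p * (aeval X r)⁻¹}

variable {X Y : Q}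

lemma X_ne_scalar (hweyl : X * Y - Y * X = 1) (c : ℂ) : X ≠ algebraMap ℂ Q c := by
  intro h
  rw [h, Algebra.commutes, sub_self] at hweyl
  exact zero_ne_one hweyl

lemma aeval_eq_zero (hweyl : X * Y - Y * X = 1) :
    ∀ p : Polynomial ℂ, aeval X p = 0 → p = 0 := by
  suffices H : ∀ n : ℕ, ∀ p : Polynomial ℂ, p.natDegree ≤ n → aeval X p = 0 → p = 0 by
    intro p hp; exact H p.natDegree p le_rfl hp
  intro n
  induction n with
  | zero =>
    intro p hdeg hz
    rw [Polynomial.eq_C_of_natDegree_le_zero hdeg] at hz ⊢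
    rw [aeval_C] at hz
    rw [show p.coeff 0 = 0 from (algebraMap ℂ Q).injective (by rw [hz, map_zero])]; simp
  | succ n ih =>
    intro p hdeg hz
    rcases eq_or_ne p 0 with h0 | h0
    · exact h0
    rcases Nat.eq_zero_or_pos p.natDegree with hd0 | hdpos
    · rw [Polynomial.eq_C_of_natDegree_le_zero hd0.le] at hz ⊢
      rw [aeval_C] at hz
      rw [show p.coeff 0 = 0 from (algebraMap ℂ Q).injective (by rw [hz, map_zero])]; simp
    · obtain ⟨c, hc⟩ := Complex.exists_root (natDegree_pos_iff_degree_pos.mp hdpos)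
      obtain ⟨g, hg⟩ := dvd_iff_isRoot.mpr hc
      have hgne : g ≠ 0 := by rintro rfl; rw [mul_zero] at hg; exact h0 hg
      have hXc : X - algebraMap ℂ Q c ≠ 0 := sub_ne_zero.mpr (X_ne_scalar hweyl c)
      have hzg : aeval X g = 0 := by
        rw [hg, map_mul] at hz
        have : (X - algebraMap ℂ Q c) * aeval X g = 0 := by simpa using hz
        rcases mul_eq_zero.mp this with h | h
        · exact absurd h hXc
        · exact h
      have hdg : g.natDegree ≤ n := by
        have hm := Polynomial.natDegree_mul (Polynomial.X_sub_C_ne_zero c) hgne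
        rw [hg, hm, natDegree_X_sub_C] at hdeg; omega
      rw [hg, ih g hdg hzg, mul_zero]

lemma aeval_ne_zero' (hweyl : X * Y - Y * X = 1) {p : Polynomial ℂ} (hp : p ≠ 0) :
    aeval X p ≠ 0 := fun h => hp (aeval_eq_zero hweyl p h)

lemma commute_aeval (p r : Polynomial ℂ) : Commute (aeval X p) (aeval X r) := by
  unfold Commute SemiconjBy
  rw [← map_mul, ← map_mul, mul_comm]

lemma RF_comm {a b : Q} (ha : a ∈ RF X) (hb : b ∈ RF X) : Commute a b := by
  obtain ⟨p1, r1, -, rfl⟩ := ha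
  obtain ⟨p2, r2, -, rfl⟩ := hb
  have c1 : Commute (aeval X p1) (aeval X p2 * (aeval X r2)⁻¹) :=
    (commute_aeval p1 p2).mul_right (commute_aeval p1 r2).inv_right₀
  have c2 : Commute (aeval X r1) (aeval X p2 * (aeval X r2)⁻¹) :=
    (commute_aeval r1 p2).mul_right (commute_aeval r1 r2).inv_right₀
  exact c1.mul_left c2.inv_left₀

lemma RF_aeval (p : Polynomial ℂ) : aeval X p ∈ RF X :=
  ⟨p, 1, one_ne_zero, by simp⟩

lemma RF_zero : (0 : Q) ∈ RF X := ⟨0, 1, one_ne_zero, by simp⟩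

lemma RF_one : (1 : Q) ∈ RF X := ⟨1, 1, one_ne_zero, by simp⟩

lemma RF_algebraMap (c : ℂ) : algebraMap ℂ Q c ∈ RF X := by
  simpa using RF_aeval (X := X) (C c)

lemma RF_mul (hweyl : X * Y - Y * X = 1) {a b : Q}
    (ha : a ∈ RF X) (hb : b ∈ RF X) : a * b ∈ RF X := by
  obtain ⟨p1, r1, hr1, rfl⟩ := ha
  obtain ⟨p2, r2, hr2, rfl⟩ := hb
  refine ⟨p1 * p2, r2 * r1, mul_ne_zero hr2 hr1, ?_⟩
  have hswap : aeval X p2 * (aeval X r1)⁻¹ = (aeval X r1)⁻¹ * aeval X p2 :=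
    (commute_aeval p2 r1).inv_right₀.eq
  rw [map_mul, map_mul, mul_inv_rev, mul_assoc, ← mul_assoc ((aeval X r1)⁻¹), ← hswap,
    mul_assoc, mul_assoc]

lemma RF_neg {a : Q} (ha : a ∈ RF X) : -a ∈ RF X := by
  obtain ⟨p, r, hr, rfl⟩ := ha
  exact ⟨-p, r, hr, by rw [map_neg, neg_mul]⟩

lemma RF_add (hweyl : X * Y - Y * X = 1) {a b : Q}
    (ha : a ∈ RF X) (hb : b ∈ RF X) : a + b ∈ RF X := by
  obtain ⟨p1, r1, hr1, rfl⟩ := ha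
  obtain ⟨p2, r2, hr2, rfl⟩ := hb
  refine ⟨p1 * r2 + r1 * p2, r1 * r2, mul_ne_zero hr1 hr2, ?_⟩
  rw [← div_eq_mul_inv, ← div_eq_mul_inv, ← div_eq_mul_inv,
    (commute_aeval r1 p2).div_add_div (commute_aeval r1 r2)
      (aeval_ne_zero' hweyl hr1) (aeval_ne_zero' hweyl hr2), map_add, map_mul, map_mul, map_mul]

lemma RF_inv (hweyl : X * Y - Y * X = 1) {a : Q} (ha : a ∈ RF X) : a⁻¹ ∈ RF X := by
  rcases eq_or_ne a 0 with rfl | h0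
  · simpa using RF_zero (X := X)
  obtain ⟨p, r, hr, rfl⟩ := ha
  have hp : p ≠ 0 := by
    rintro rfl; exact h0 (by simp)
  refine ⟨r, p, hp, ?_⟩
  rw [mul_inv_rev, inv_inv]

lemma Y_comm_aeval (hweyl : X * Y - Y * X = 1) (p : Polynomial ℂ) :
    Y * aeval X p = aeval X p * Y - aeval X (derivative p) := by
  induction p using Polynomial.induction_on with
  | C a => rw [aeval_C, derivative_C, map_zero, sub_zero, Algebra.commutes]
  | add p q hp hq =>
      rw [map_add, derivative_add, map_add, mul_add, hp, hq, add_mul]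
      abel
  | monomial n a ih =>
      have hYX : Y * X = X * Y - 1 := by rw [← hweyl, sub_sub_cancel]
      have e1 : (C a * Polynomial.X ^ (n+1) : Polynomial ℂ)
          = (C a * Polynomial.X ^ n) * Polynomial.X := by ring
      have e2 : derivative ((C a * Polynomial.X ^ n) * Polynomial.X)
          = derivative (C a * Polynomial.X ^ n) * Polynomial.X + C a * Polynomial.X ^ n := by
        rw [derivative_mul, derivative_X, mul_one]
      have e3 : aeval X (C a * Polynomial.X ^ (n+1)) = aeval X (C a * Polynomial.X ^ n) * X := by
        rw [e1, map_mul, aeval_X]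
      have e4 : aeval X (derivative (C a * Polynomial.X ^ (n+1)))
          = aeval X (derivative (C a * Polynomial.X ^ n)) * X + aeval X (C a * Polynomial.X ^ n) := by
        rw [e1, e2, map_add, map_mul, aeval_X]
      rw [e3, e4, ← mul_assoc, ih, sub_mul, mul_assoc, hYX, mul_sub, mul_one, ← mul_assoc]
      abel

lemma Y_mul_RF (hweyl : X * Y - Y * X = 1) {c : Q} (hc : c ∈ RF X) :
    ∃ d ∈ RF X, Y * c = c * Y + d := by
  obtain ⟨p, r, hr, rfl⟩ := hc
  have hR : aeval X r ≠ 0 := aeval_ne_zero' hweyl hr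
  set P := aeval X p with hP
  set R := aeval X r with hRdef
  set P' := aeval X (derivative p) with hP'
  set R' := aeval X (derivative r) with hR'
  have h1 : Y * R = R * Y - R' := Y_comm_aeval hweyl r
  have hRY : R * Y = Y * R + R' := by rw [h1]; abel
  have h2 : Y * R⁻¹ = R⁻¹ * Y + R⁻¹ * R' * R⁻¹ := by
    apply mul_left_cancel₀ hR
    rw [← mul_assoc, hRY, add_mul, mul_assoc Y, mul_inv_cancel₀ hR, mul_one,
      mul_add, ← mul_assoc, mul_inv_cancel₀ hR, one_mul, ← mul_assoc, ← mul_assoc,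
      mul_inv_cancel₀ hR, one_mul]
  have h4 : Y * P = P * Y - P' := Y_comm_aeval hweyl p
  refine ⟨P * R⁻¹ * R' * R⁻¹ - P' * R⁻¹, ?_, ?_⟩
  · have hPR : P * R⁻¹ ∈ RF X := ⟨p, r, hr, rfl⟩
    rw [hP', hR', sub_eq_add_neg]
    exact RF_add hweyl
      (RF_mul hweyl (RF_mul hweyl hPR (RF_aeval _)) (RF_inv hweyl (RF_aeval r)))
      (RF_neg (RF_mul hweyl (RF_aeval _) (RF_inv hweyl (RF_aeval r))))
  · rw [← mul_assoc, h4, sub_mul, mul_assoc P, h2, mul_add, ← mul_assoc, ← mul_assoc,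
      ← mul_assoc]
    abel

def Rep (X Y s : Q) (n : ℕ) (t : Q) : Prop :=
  ∃ a : ℕ → Q, (∀ i, a i ∈ RF X) ∧ s = ∑ i ∈ Finset.range (n+1), a i * Y ^ i ∧ a n = t

lemma Rep.t_mem {s t : Q} {n : ℕ} (h : Rep X Y s n t) : t ∈ RF X := by
  obtain ⟨a, ha, -, rfl⟩ := h; exact ha n

lemma Rep_of_RF {c : Q} (hc : c ∈ RF X) : Rep X Y c 0 c :=
  ⟨fun _ => c, fun _ => hc, by simp, rfl⟩

lemma Rep_zero {n : ℕ} : Rep X Y 0 n 0 :=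
  ⟨fun _ => 0, fun _ => RF_zero, by simp, rfl⟩

lemma Rep_add (hweyl : X * Y - Y * X = 1) {s s' t t' : Q} {n : ℕ}
    (h : Rep X Y s n t) (h' : Rep X Y s' n t') : Rep X Y (s + s') n (t + t') := by
  obtain ⟨a, ha, rfl, rfl⟩ := h
  obtain ⟨b, hb, rfl, rfl⟩ := h'
  refine ⟨fun i => a i + b i, fun i => RF_add hweyl (ha i) (hb i), ?_, rfl⟩
  rw [← Finset.sum_add_distrib]
  exact Finset.sum_congr rfl fun i _ => (add_mul _ _ _).symm

lemma Rep_neg {s t : Q} {n : ℕ} (h : Rep X Y s n t) : Rep X Y (-s) n (-t) := by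
  obtain ⟨a, ha, rfl, rfl⟩ := h
  refine ⟨fun i => -(a i), fun i => RF_neg (ha i), ?_, rfl⟩
  rw [← Finset.sum_neg_distrib]
  exact Finset.sum_congr rfl fun i _ => (neg_mul _ _).symm

lemma Rep_pad {s t : Q} {n m : ℕ} (h : Rep X Y s n t) (hm : n < m) : Rep X Y s m 0 := by
  obtain ⟨a, ha, rfl, -⟩ := h
  refine ⟨fun i => if i ≤ n then a i else 0, fun i => ?_, ?_, if_neg (by omega)⟩
  · dsimp only; split
    · exact ha i
    · exact RF_zero
  · have e1 : ∑ i ∈ Finset.range (n+1), a i * Y ^ i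
        = ∑ i ∈ Finset.range (n+1), (if i ≤ n then a i else 0) * Y ^ i :=
      Finset.sum_congr rfl fun i hi => by
        rw [if_pos (by simpa [Nat.lt_succ_iff] using hi)]
    rw [e1]
    refine Finset.sum_subset (Finset.range_subset_range.mpr (by omega)) ?_
    intro i hi hni
    rw [if_neg (by simp only [Finset.mem_range, Nat.lt_succ_iff] at hni; omega), zero_mul]

lemma Rep_mul_left (hweyl : X * Y - Y * X = 1) {c s t : Q} {n : ℕ}
    (hc : c ∈ RF X) (h : Rep X Y s n t) : Rep X Y (c * s) n (c * t) := by
  obtain ⟨a, ha, rfl, rfl⟩ := h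
  refine ⟨fun i => c * a i, fun i => RF_mul hweyl hc (ha i), ?_, rfl⟩
  rw [Finset.mul_sum]
  exact Finset.sum_congr rfl fun i _ => (mul_assoc _ _ _).symm

lemma Rep_shift {a : ℕ → Q} (ha : ∀ i, a i ∈ RF X) (n : ℕ) :
    Rep X Y (∑ i ∈ Finset.range (n+1), a i * Y ^ (i+1)) (n+1) (a n) := by
  refine ⟨fun j => match j with | 0 => 0 | (i+1) => a i, fun j => ?_, ?_, rfl⟩
  · match j with
    | 0 => exact RF_zero
    | (i+1) => exact ha i
  · conv_rhs => rw [Finset.sum_range_succ']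
    simp

lemma Rep_Y_mul (hweyl : X * Y - Y * X = 1) {s t : Q} {n : ℕ}
    (h : Rep X Y s n t) : Rep X Y (Y * s) (n+1) t := by
  obtain ⟨a, ha, rfl, rfl⟩ := h
  choose d hd hyd using fun i => Y_mul_RF hweyl (ha i)
  have e : Y * ∑ i ∈ Finset.range (n+1), a i * Y ^ i
      = (∑ i ∈ Finset.range (n+1), a i * Y ^ (i+1))
        + ∑ i ∈ Finset.range (n+1), d i * Y ^ i := by
    rw [Finset.mul_sum, ← Finset.sum_add_distrib]
    refine Finset.sum_congr rfl fun i _ => ?_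
    rw [← mul_assoc, hyd i, add_mul, mul_assoc, ← pow_succ']
  rw [e]
  have h1 := Rep_shift (X := X) (Y := Y) ha n
  have h2 : Rep X Y (∑ i ∈ Finset.range (n+1), d i * Y ^ i) (n+1) 0 :=
    Rep_pad ⟨d, hd, rfl, rfl⟩ (Nat.lt_succ_self n)
  simpa using Rep_add hweyl h1 h2

lemma Rep_sum (hweyl : X * Y - Y * X = 1) {ι : Type} [DecidableEq ι] (F : Finset ι)
    (f u : ι → Q) (N : ℕ) (h : ∀ i ∈ F, Rep X Y (f i) N (u i)) :
    Rep X Y (∑ i ∈ F, f i) N (∑ i ∈ F, u i) := by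
  induction F using Finset.induction_on with
  | empty => simpa using Rep_zero (X := X) (Y := Y)
  | @insert j F hj ih =>
      rw [Finset.sum_insert hj, Finset.sum_insert hj]
      exact Rep_add hweyl (h _ (Finset.mem_insert_self _ _))
        (ih fun i hi => h i (Finset.mem_insert_of_mem hi))

lemma Rep_mul (hweyl : X * Y - Y * X = 1) {s s' t t' : Q} {n m : ℕ}
    (h : Rep X Y s n t) (h' : Rep X Y s' m t') : Rep X Y (s * s') (n + m) (t * t') := by
  obtain ⟨a, ha, rfl, rfl⟩ := h
  have hpow : ∀ i : ℕ, Rep X Y (Y ^ i * s') (m + i) t' := by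
    intro i; induction i with
    | zero => simpa using h'
    | succ i ih =>
        have h2 := Rep_Y_mul hweyl ih
        have e : Y ^ (i+1) * s' = Y * (Y ^ i * s') := by rw [pow_succ', mul_assoc]
        rw [e]
        exact h2
  have hterm : ∀ i ∈ Finset.range (n+1),
      Rep X Y (a i * Y ^ i * s') (n + m) (if i = n then a n * t' else 0) := by
    intro i hi
    have h1 : Rep X Y (a i * (Y ^ i * s')) (m + i) (a i * t') :=
      Rep_mul_left hweyl (ha i) (hpow i)
    rw [← mul_assoc] at h1
    rcases eq_or_ne i n with rfl | hne
    · rw [if_pos rfl]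
      have : m + i = i + m := Nat.add_comm m i
      rw [this] at h1; exact h1
    · rw [if_neg hne]
      exact Rep_pad h1 (by simp only [Finset.mem_range, Nat.lt_succ_iff] at hi; omega)
  have hs := Rep_sum hweyl (Finset.range (n+1)) _ _ _ hterm
  rw [← Finset.sum_mul] at hs
  simpa [Finset.sum_ite_eq'] using hs

lemma Rep_zero_top
    (hindep : ∀ (n : ℕ) (a : ℕ → Q), (∀ i, a i ∈ RF X) →
      (∑ i ∈ Finset.range (n + 1), a i * Y ^ i) = 0 → ∀ i ≤ n, a i = 0)
    {n : ℕ} {t : Q} (h : Rep X Y 0 n t) : t = 0 := by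
  obtain ⟨a, ha, h0, rfl⟩ := h
  exact hindep n a ha h0.symm n le_rfl

lemma Rep_top_eq (hweyl : X * Y - Y * X = 1)
    (hindep : ∀ (n : ℕ) (a : ℕ → Q), (∀ i, a i ∈ RF X) →
      (∑ i ∈ Finset.range (n + 1), a i * Y ^ i) = 0 → ∀ i ≤ n, a i = 0)
    {s t u : Q} {n : ℕ} (h : Rep X Y s n t) (h' : Rep X Y s n u) : t = u := by
  have h2 := Rep_add hweyl h (Rep_neg h')
  rw [add_neg_cancel] at h2
  have h3 := Rep_zero_top hindep h2
  rw [← sub_eq_add_neg] at h3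
  exact sub_eq_zero.mp h3

lemma Rep_deg_eq (hweyl : X * Y - Y * X = 1)
    (hindep : ∀ (n : ℕ) (a : ℕ → Q), (∀ i, a i ∈ RF X) →
      (∑ i ∈ Finset.range (n + 1), a i * Y ^ i) = 0 → ∀ i ≤ n, a i = 0)
    {s t u : Q} {n m : ℕ} (h : Rep X Y s n t) (h' : Rep X Y s m u)
    (ht : t ≠ 0) (hu : u ≠ 0) : n = m := by
  rcases lt_trichotomy n m with hlt | heq | hlt
  · exact absurd (Rep_top_eq hweyl hindep h' (Rep_pad h hlt)) hu
  · exact heq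
  · exact absurd (Rep_top_eq hweyl hindep h (Rep_pad h' hlt)) ht

lemma Rep_exists_ne :
    ∀ {n : ℕ} {s t : Q}, Rep X Y s n t → s ≠ 0 → ∃ m u, Rep X Y s m u ∧ u ≠ 0 := by
  intro n
  induction n with
  | zero =>
    intro s t h hs
    refine ⟨0, t, h, fun h0 => hs ?_⟩
    obtain ⟨a, ha, hsum, hat⟩ := h
    rw [hsum, Finset.sum_range_one, pow_zero, mul_one, hat, h0]
  | succ n ih =>
    intro s t h hs
    rcases eq_or_ne t 0 with rfl | ht
    · obtain ⟨a, ha, hsum, hat⟩ := h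
      refine ih (t := a n) ⟨a, ha, ?_, rfl⟩ hs
      rw [hsum, Finset.sum_range_succ, hat, zero_mul, add_zero]
    · exact ⟨_, t, h, ht⟩

end NFIU

/-- Uniqueness of the normalized fractional-ideal representative `M_x` (Lemma 5.1): inside the
quotient division ring `Q` of the Weyl algebra, if `M` and `M'` are nonzero fractional right
ideals contained in `ℂ(x)[y]`, each meeting `ℂ[x]` nontrivially, with all leading coefficients
(in `y`) in `ℂ[x]` and each containing an element with nonzero constant leading coefficient,
and if `M' = qM` for some `q ∈ Q`, then `q` is a nonzero constant and `M' = M`. -/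
theorem normalized_fractional_ideal_unique
    (Q : Type) [DivisionRing Q] [Algebra ℂ Q]
    (X Y : Q) (hweyl : X * Y - Y * X = 1)
    -- `Cx` is the subfield `ℂ(x) ⊆ Q` of rational functions in `X`
    (Cx : Set Q)
    (hCx : Cx = {q : Q | ∃ p r : Polynomial ℂ, r ≠ 0 ∧
      q = Polynomial.aeval X p * (Polynomial.aeval X r)⁻¹})
    -- `CxY` is the subring `ℂ(x)[y] ⊆ Q`
    (CxY : Set Q)
    (hCxY : CxY = {q : Q | ∃ (n : ℕ) (a : ℕ → Q), (∀ i, a i ∈ Cx) ∧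
      q = ∑ i ∈ Finset.range (n + 1), a i * Y ^ i})
    -- the powers of `Y` are left linearly independent over `ℂ(x)`, so leading
    -- coefficients are well defined
    (hindep : ∀ (n : ℕ) (a : ℕ → Q), (∀ i, a i ∈ Cx) →
      (∑ i ∈ Finset.range (n + 1), a i * Y ^ i) = 0 → ∀ i ≤ n, a i = 0)
    (M M' : Submodule ℂ Q) (hMne : M ≠ ⊥)
    -- `M`, `M'` are right modules over the Weyl subalgebra generated by `X` and `Y`
    (hMr : ∀ m ∈ M, m * X ∈ M ∧ m * Y ∈ M)
    (hM'r : ∀ m ∈ M', m * X ∈ M' ∧ m * Y ∈ M')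
    -- (1) `M, M' ⊆ ℂ(x)[y]` and they meet `ℂ[x]` nontrivially
    (hM1 : (M : Set Q) ⊆ CxY) (hM'1 : (M' : Set Q) ⊆ CxY)
    (hMcap : ∃ p : Polynomial ℂ, p ≠ 0 ∧ Polynomial.aeval X p ∈ M)
    (hM'cap : ∃ p : Polynomial ℂ, p ≠ 0 ∧ Polynomial.aeval X p ∈ M')
    -- (2) all leading coefficients of elements of `M`, `M'` lie in `ℂ[x]`
    (hM2 : ∀ m ∈ M, ∀ (n : ℕ) (a : ℕ → Q), (∀ i, a i ∈ Cx) →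
      m = ∑ i ∈ Finset.range (n + 1), a i * Y ^ i → a n ≠ 0 →
      ∃ p : Polynomial ℂ, a n = Polynomial.aeval X p)
    (hM'2 : ∀ m ∈ M', ∀ (n : ℕ) (a : ℕ → Q), (∀ i, a i ∈ Cx) →
      m = ∑ i ∈ Finset.range (n + 1), a i * Y ^ i → a n ≠ 0 →
      ∃ p : Polynomial ℂ, a n = Polynomial.aeval X p)
    -- (3) `M`, `M'` contain an element with constant nonzero leading coefficient
    (hM3 : ∃ m ∈ M, ∃ (n : ℕ) (a : ℕ → Q), (∀ i, a i ∈ Cx) ∧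
      m = ∑ i ∈ Finset.range (n + 1), a i * Y ^ i ∧
      ∃ c : ℂ, c ≠ 0 ∧ a n = algebraMap ℂ Q c)
    (hM'3 : ∃ m ∈ M', ∃ (n : ℕ) (a : ℕ → Q), (∀ i, a i ∈ Cx) ∧
      m = ∑ i ∈ Finset.range (n + 1), a i * Y ^ i ∧
      ∃ c : ℂ, c ≠ 0 ∧ a n = algebraMap ℂ Q c)
    (q : Q) (hq : M' = Submodule.map (LinearMap.mulLeft ℂ q) M) :
    (∃ c : ℂ, c ≠ 0 ∧ q = algebraMap ℂ Q c) ∧ M' = M := by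
  subst hCx hCxY
  have hrepM : ∀ m ∈ M, ∃ n t, NFIU.Rep X Y m n t := by
    intro m hm
    obtain ⟨n, a, ha, hs⟩ := hM1 hm
    exact ⟨n, a n, a, ha, hs, rfl⟩
  have hrepM' : ∀ m ∈ M', ∃ n t, NFIU.Rep X Y m n t := by
    intro m hm
    obtain ⟨n, a, ha, hs⟩ := hM'1 hm
    exact ⟨n, a n, a, ha, hs, rfl⟩
  obtain ⟨p, hp0, hpM⟩ := hMcap
  obtain ⟨p', hp'0, hp'M⟩ := hM'cap
  have hpne : Polynomial.aeval X p ≠ 0 := NFIU.aeval_ne_zero' hweyl hp0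
  have hp'ne : Polynomial.aeval X p' ≠ 0 := NFIU.aeval_ne_zero' hweyl hp'0
  have hmapmem : ∀ x : Q, x ∈ M' ↔ ∃ m ∈ M, q * m = x := by
    intro x
    rw [hq, Submodule.mem_map]
    constructor
    · rintro ⟨m, hm, hme⟩; exact ⟨m, hm, by simpa using hme⟩
    · rintro ⟨m, hm, hme⟩; exact ⟨m, hm, by simpa using hme⟩
  obtain ⟨m₀, hm₀, hm₀eq⟩ := (hmapmem _).mp hp'M
  have hqne : q ≠ 0 := by
    rintro rfl; rw [zero_mul] at hm₀eq; exact hp'ne hm₀eq.symm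
  have hqM' : q * Polynomial.aeval X p ∈ M' := (hmapmem _).mpr ⟨Polynomial.aeval X p, hpM, rfl⟩
  obtain ⟨n₁, t₁, hrep1⟩ := hrepM' _ hqM'
  have hrepq : NFIU.Rep X Y q n₁ (t₁ * (Polynomial.aeval X p)⁻¹) := by
    have h2 := NFIU.Rep_mul hweyl hrep1
      (NFIU.Rep_of_RF (NFIU.RF_inv hweyl (NFIU.RF_aeval p)))
    rw [mul_assoc, mul_inv_cancel₀ hpne, mul_one] at h2
    exact h2
  have hm₀eq' : q⁻¹ * Polynomial.aeval X p' = m₀ := by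
    rw [← hm₀eq, ← mul_assoc, inv_mul_cancel₀ hqne, one_mul]
  obtain ⟨n₂, t₂, hrep2⟩ := hrepM _ hm₀
  have hrepqinv : NFIU.Rep X Y q⁻¹ n₂ (t₂ * (Polynomial.aeval X p')⁻¹) := by
    have h2 := NFIU.Rep_mul hweyl hrep2
      (NFIU.Rep_of_RF (NFIU.RF_inv hweyl (NFIU.RF_aeval p')))
    have e : q⁻¹ = m₀ * (Polynomial.aeval X p')⁻¹ := by
      rw [← hm₀eq', mul_assoc, mul_inv_cancel₀ hp'ne, mul_one]
    rw [e]; exact h2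
  obtain ⟨nq, tq, hq1, htq⟩ := NFIU.Rep_exists_ne hrepq hqne
  obtain ⟨nq', tq', hq2, htq'⟩ := NFIU.Rep_exists_ne hrepqinv (inv_ne_zero hqne)
  have hprod := NFIU.Rep_mul hweyl hq1 hq2
  rw [mul_inv_cancel₀ hqne] at hprod
  have hone : NFIU.Rep X Y (1:Q) 0 1 := NFIU.Rep_of_RF NFIU.RF_one
  have hdeg : nq + nq' = 0 :=
    NFIU.Rep_deg_eq hweyl hindep hprod hone (mul_ne_zero htq htq') one_ne_zero
  have hnq : nq = 0 := by omega
  rw [hnq] at hq1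
  have hqRF : q ∈ NFIU.RF X := by
    obtain ⟨a, ha, hsum, hat⟩ := hq1
    rw [hsum, Finset.sum_range_one, pow_zero, mul_one]
    exact ha 0
  have hqinvRF : q⁻¹ ∈ NFIU.RF X := NFIU.RF_inv hweyl hqRF
  -- use (3) for M and (2) for M' to see that q is a polynomial in X
  obtain ⟨m, hm, n, a, ha, hsum, c, hc, hat⟩ := hM3
  have hrepm : NFIU.Rep X Y m n (algebraMap ℂ Q c) := ⟨a, ha, hsum, hat⟩
  have hcne : algebraMap ℂ Q c ≠ 0 :=
    fun h => hc ((algebraMap ℂ Q).injective (by rw [h, map_zero]))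
  have hqm : q * m ∈ M' := (hmapmem _).mpr ⟨m, hm, rfl⟩
  obtain ⟨b, hb, hbsum, hbt⟩ := NFIU.Rep_mul_left hweyl hqRF hrepm
  obtain ⟨p₁, hp₁⟩ := hM'2 _ hqm n b hb hbsum
    (by rw [hbt]; exact mul_ne_zero hqne hcne)
  have hq_poly : q = Polynomial.aeval X (Polynomial.C c⁻¹ * p₁) := by
    rw [map_mul, Polynomial.aeval_C, ← hp₁, hbt, map_inv₀, ← Algebra.commutes,
      ← mul_assoc, inv_mul_cancel₀ hcne, one_mul]
  -- use (3) for M' and (2) for M to see that q⁻¹ is a polynomial in X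
  obtain ⟨m', hm', n', a', ha', hsum', c', hc', hat'⟩ := hM'3
  have hrepm' : NFIU.Rep X Y m' n' (algebraMap ℂ Q c') := ⟨a', ha', hsum', hat'⟩
  have hcne' : algebraMap ℂ Q c' ≠ 0 :=
    fun h => hc' ((algebraMap ℂ Q).injective (by rw [h, map_zero]))
  obtain ⟨u, hu, hueq⟩ := (hmapmem _).mp hm'
  have hq'm : q⁻¹ * m' ∈ M := by
    rw [← hueq, ← mul_assoc, inv_mul_cancel₀ hqne, one_mul]; exact hu
  obtain ⟨b', hb', hbsum', hbt'⟩ := NFIU.Rep_mul_left hweyl hqinvRF hrepm'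
  obtain ⟨p₂, hp₂⟩ := hM2 _ hq'm n' b' hb' hbsum'
    (by rw [hbt']; exact mul_ne_zero (inv_ne_zero hqne) hcne')
  have hqinv_poly : q⁻¹ = Polynomial.aeval X (Polynomial.C c'⁻¹ * p₂) := by
    rw [map_mul, Polynomial.aeval_C, ← hp₂, hbt', map_inv₀, ← Algebra.commutes,
      ← mul_assoc, inv_mul_cancel₀ hcne', one_mul]
  -- the product of the two polynomials is 1, so both are constants
  have hprodpoly : Polynomial.aeval X
      ((Polynomial.C c⁻¹ * p₁) * (Polynomial.C c'⁻¹ * p₂)) = 1 := by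
    rw [map_mul, ← hq_poly, ← hqinv_poly, mul_inv_cancel₀ hqne]
  have hpoly1 : (Polynomial.C c⁻¹ * p₁) * (Polynomial.C c'⁻¹ * p₂) = 1 := by
    have h0 := NFIU.aeval_eq_zero hweyl
      ((Polynomial.C c⁻¹ * p₁) * (Polynomial.C c'⁻¹ * p₂) - 1)
      (by rw [map_sub, hprodpoly, map_one, sub_self])
    exact sub_eq_zero.mp h0
  obtain ⟨c₀, -, hc₀⟩ := Polynomial.isUnit_iff.mp (IsUnit.of_mul_eq_one _ hpoly1)
  have hq_const : q = algebraMap ℂ Q c₀ := by rw [hq_poly, ← hc₀, Polynomial.aeval_C]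
  have hc₀ne : c₀ ≠ 0 := by
    rintro rfl; exact hqne (by rw [hq_const, map_zero])
  refine ⟨⟨c₀, hc₀ne, hq_const⟩, ?_⟩
  rw [hq]
  apply le_antisymm
  · intro x hx
    rw [Submodule.mem_map] at hx
    obtain ⟨u', hu', rfl⟩ := hx
    have e : (LinearMap.mulLeft ℂ q) u' = c₀ • u' := by
      rw [LinearMap.mulLeft_apply, hq_const, Algebra.smul_def]
    rw [e]
    exact M.smul_mem c₀ hu'
  · intro x hx
    rw [Submodule.mem_map]
    refine ⟨c₀⁻¹ • x, M.smul_mem _ hx, ?_⟩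
    rw [LinearMap.mulLeft_apply, hq_const, Algebra.smul_def, ← mul_assoc, ← map_mul,
      mul_inv_cancel₀ hc₀ne, map_one, one_mul]
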